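/- Let M, M̃ ∈ ℝ^{2×2}, θ ∈ ℝ², K ≥ 1, γ > 0, with G := ∑_{k=1}^K (M̃^k)^⊤ M̃^k invertible. Let r₁,…,r_K be independent square-integrable random vectors in ℝ², each with mean zero and covariance matrix γ² I₂, and set y_k = M^k θ + r_k and θ̂ = G^{-1} ∑_{k=1}^K (M̃^k)^⊤ y_k. Then E[θ̂] = θ + b and E[‖θ̂ − θ‖²] = ‖b‖² + γ² tr(G^{-1}), where b = G^{-1} ∑_{k=1}^K (M̃^k)^⊤ (M^k − M̃^k) θ. -/

import Mathlib

open Matrix MeasureTheory ProbabilityTheory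

lemma aux_sum_mulVec {m n ι : Type*} [Fintype n] (s : Finset ι)
    (f : ι → Matrix m n ℝ) (v : n → ℝ) :
    (∑ k ∈ s, f k) *ᵥ v = ∑ k ∈ s, f k *ᵥ v := by
  induction s using Finset.cons_induction with
  | empty => simp
  | cons a s ha ih => simp [Finset.sum_cons, Matrix.add_mulVec, ih]

lemma aux_mulVec_sum {m n ι : Type*} [Fintype n] (s : Finset ι)
    (A : Matrix m n ℝ) (v : ι → n → ℝ) :
    A *ᵥ (∑ k ∈ s, v k) = ∑ k ∈ s, A *ᵥ v k := by
  induction s using Finset.cons_induction with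
  | empty => simp
  | cons a s ha ih => simp [Finset.sum_cons, Matrix.mulVec_add, ih]

/-- Mean and mean squared error of the quasi-maximum likelihood estimate
for the harmonic oscillator: with `y_k = M^k θ + r_k`, `r_k` independent, square
integrable, mean zero, covariance `γ² I₂`, and `θ̂ = G⁻¹ ∑_k (M̃^k)ᵀ y_k` where
`G = ∑_{k=1}^K (M̃^k)ᵀ M̃^k` is invertible, we get `E[θ̂] = θ + b` and
`E[‖θ̂ - θ‖²] = ‖b‖² + γ² tr(G⁻¹)` with `b = G⁻¹ ∑_k (M̃^k)ᵀ (M^k - M̃^k) θ`. -/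
theorem stmt_6 (K : ℕ) (hK : 1 ≤ K) (γ : ℝ) (hγ : 0 < γ)
    (M Mt : Matrix (Fin 2) (Fin 2) ℝ) (θ : Fin 2 → ℝ)
    (G : Matrix (Fin 2) (Fin 2) ℝ)
    (hG : G = ∑ k : Fin K, (Mt ^ ((k : ℕ) + 1))ᵀ * Mt ^ ((k : ℕ) + 1))
    (hGinv : IsUnit G)
    {Ω : Type*} [MeasurableSpace Ω] (μ : Measure Ω) [IsProbabilityMeasure μ]
    (r : Fin K → Ω → Fin 2 → ℝ)
    (hmeas : ∀ k, Measurable (r k))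
    (hindep : iIndepFun r μ)
    (hL2 : ∀ k i, MemLp (fun ω => r k ω i) 2 μ)
    (hmean : ∀ k i, ∫ ω, r k ω i ∂μ = 0)
    (hcov : ∀ k i j, ∫ ω, r k ω i * r k ω j ∂μ = if i = j then γ ^ 2 else 0)
    (y : Fin K → Ω → Fin 2 → ℝ)
    (hy : ∀ k ω, y k ω = M ^ ((k : ℕ) + 1) *ᵥ θ + r k ω)
    (θhat : Ω → Fin 2 → ℝ)
    (hθhat : ∀ ω, θhat ω = G⁻¹ *ᵥ ∑ k : Fin K, (Mt ^ ((k : ℕ) + 1))ᵀ *ᵥ y k ω)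
    (b : Fin 2 → ℝ)
    (hb : b = G⁻¹ *ᵥ ∑ k : Fin K, (Mt ^ ((k : ℕ) + 1))ᵀ *ᵥ ((M ^ ((k : ℕ) + 1)
      - Mt ^ ((k : ℕ) + 1)) *ᵥ θ)) :
    (∀ i, ∫ ω, θhat ω i ∂μ = θ i + b i) ∧
    ∫ ω, ∑ i, (θhat ω i - θ i) ^ 2 ∂μ = (∑ i, b i ^ 2) + γ ^ 2 * Matrix.trace G⁻¹ := by
  have hGG : G⁻¹ * G = 1 :=
    Matrix.nonsing_inv_mul G ((Matrix.isUnit_iff_isUnit_det G).mp hGinv)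
  set c : Fin K → Matrix (Fin 2) (Fin 2) ℝ := fun k => G⁻¹ * (Mt ^ ((k : ℕ) + 1))ᵀ
    with hc
  -- Key pointwise identity
  have hkey : ∀ ω, θhat ω = b + θ + ∑ k : Fin K, c k *ᵥ r k ω := by
    intro ω
    have hterm : ∀ k : Fin K, (Mt ^ ((k : ℕ) + 1))ᵀ *ᵥ y k ω
        = (Mt ^ ((k : ℕ) + 1))ᵀ *ᵥ ((M ^ ((k : ℕ) + 1) - Mt ^ ((k : ℕ) + 1)) *ᵥ θ)
          + ((Mt ^ ((k : ℕ) + 1))ᵀ * Mt ^ ((k : ℕ) + 1)) *ᵥ θ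
          + (Mt ^ ((k : ℕ) + 1))ᵀ *ᵥ r k ω := by
      intro k
      rw [hy, Matrix.mulVec_add]
      congr 1
      have h0 : M ^ ((k : ℕ) + 1) *ᵥ θ
          = (M ^ ((k : ℕ) + 1) - Mt ^ ((k : ℕ) + 1)) *ᵥ θ + Mt ^ ((k : ℕ) + 1) *ᵥ θ := by
        rw [Matrix.sub_mulVec]; abel
      rw [h0, Matrix.mulVec_add]
      simp only [Matrix.mulVec_mulVec]
    have hsum : ∑ k : Fin K, (Mt ^ ((k : ℕ) + 1))ᵀ *ᵥ y k ω
        = (∑ k : Fin K, (Mt ^ ((k : ℕ) + 1))ᵀ *ᵥ ((M ^ ((k : ℕ) + 1) - Mt ^ ((k : ℕ) + 1)) *ᵥ θ))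
          + G *ᵥ θ
          + ∑ k : Fin K, (Mt ^ ((k : ℕ) + 1))ᵀ *ᵥ r k ω := by
      rw [Finset.sum_congr rfl fun k _ => hterm k, Finset.sum_add_distrib,
        Finset.sum_add_distrib]
      congr 1
      rw [hG, aux_sum_mulVec]
    rw [hθhat, hsum, Matrix.mulVec_add, Matrix.mulVec_add, ← hb,
      Matrix.mulVec_mulVec, hGG, Matrix.one_mulVec, aux_mulVec_sum]
    congr 1
    exact Finset.sum_congr rfl fun k _ => by rw [Matrix.mulVec_mulVec]
  have hkey' : ∀ ω i, θhat ω i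
      = b i + θ i + ∑ p : Fin K × Fin 2, c p.1 i p.2 * r p.1 ω p.2 := by
    intro ω i
    rw [hkey ω]
    simp only [Pi.add_apply, Finset.sum_apply]
    congr 1
    rw [Fintype.sum_prod_type]
    exact Finset.sum_congr rfl fun k _ => by
      simp [Matrix.mulVec, dotProduct]
  -- Integrability facts
  have hInt : ∀ (k : Fin K) (j : Fin 2), Integrable (fun ω => r k ω j) μ :=
    fun k j => (hL2 k j).integrable one_le_two
  have hIntM : ∀ (k k' : Fin K) (j j' : Fin 2),
      Integrable (fun ω => r k ω j * r k' ω j') μ := by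
    intro k k' j j'
    have h := (hL2 k' j').smul (φ := fun ω => r k ω j) (hL2 k j) (r := 1) (hpqr := ⟨by
      rw [inv_one, ENNReal.inv_two_add_inv_two]⟩)
    have h2 := memLp_one_iff_integrable.mp h
    exact h2
  -- Second moments
  have hprod : ∀ (k k' : Fin K) (j j' : Fin 2),
      ∫ ω, r k ω j * r k' ω j' ∂μ = if k = k' ∧ j = j' then γ ^ 2 else 0 := by
    intro k k' j j'
    by_cases h : k = k'
    · subst h
      rw [hcov]
      by_cases h2 : j = j' <;> simp [h2]
    · have hind : IndepFun (fun ω => r k ω j) (fun ω => r k' ω j') μ :=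
        (hindep.indepFun h).comp (measurable_pi_apply j) (measurable_pi_apply j')
      have h0 : (fun ω => r k ω j * r k' ω j')
          = (fun ω => r k ω j) * (fun ω => r k' ω j') := rfl
      rw [h0, hind.integral_mul_eq_mul_integral (hInt k j).aestronglyMeasurable (hInt k' j').aestronglyMeasurable,
        hmean, hmean]
      simp [h]
  -- Mean of the noise part
  have hIntS : ∀ i, Integrable
      (fun ω => ∑ p : Fin K × Fin 2, c p.1 i p.2 * r p.1 ω p.2) μ :=
    fun i => integrable_finset_sum _ fun p _ => (hInt p.1 p.2).const_mul _
  have hES : ∀ i, ∫ ω, (∑ p : Fin K × Fin 2, c p.1 i p.2 * r p.1 ω p.2) ∂μ = 0 := by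
    intro i
    rw [integral_finset_sum _ fun p _ => (hInt p.1 p.2).const_mul _]
    refine Finset.sum_eq_zero fun p _ => ?_
    rw [integral_const_mul, hmean, mul_zero]
  -- Mean part
  have mean_part : ∀ i, ∫ ω, θhat ω i ∂μ = θ i + b i := by
    intro i
    have heq : (fun ω => θhat ω i)
        = fun ω => (b i + θ i) + ∑ p : Fin K × Fin 2, c p.1 i p.2 * r p.1 ω p.2 :=
      funext fun ω => hkey' ω i
    rw [heq, integral_add (integrable_const _) (hIntS i), integral_const, hES i]
    simp [add_comm]
  refine ⟨mean_part, ?_⟩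
  -- Second-moment of the noise part
  have hIntSq : ∀ i, Integrable (fun ω => ∑ p : Fin K × Fin 2, ∑ q : Fin K × Fin 2,
      (c p.1 i p.2 * c q.1 i q.2) * (r p.1 ω p.2 * r q.1 ω q.2)) μ :=
    fun i => integrable_finset_sum _ fun p _ => integrable_finset_sum _
      fun q _ => (hIntM _ _ _ _).const_mul _
  have hES2 : ∀ i, ∫ ω, (∑ p : Fin K × Fin 2, ∑ q : Fin K × Fin 2,
      (c p.1 i p.2 * c q.1 i q.2) * (r p.1 ω p.2 * r q.1 ω q.2)) ∂μ
      = γ ^ 2 * ∑ p : Fin K × Fin 2, (c p.1 i p.2) ^ 2 := by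
    intro i
    rw [integral_finset_sum _ fun p _ => integrable_finset_sum _
      fun q _ => (hIntM _ _ _ _).const_mul _]
    have hin : ∀ p : Fin K × Fin 2, ∫ ω, ∑ q : Fin K × Fin 2,
        (c p.1 i p.2 * c q.1 i q.2) * (r p.1 ω p.2 * r q.1 ω q.2) ∂μ
        = γ ^ 2 * (c p.1 i p.2) ^ 2 := by
      intro p
      rw [integral_finset_sum _ fun q _ => (hIntM _ _ _ _).const_mul _]
      have h1 : ∀ q : Fin K × Fin 2, ∫ ω,
          (c p.1 i p.2 * c q.1 i q.2) * (r p.1 ω p.2 * r q.1 ω q.2) ∂μ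
          = (c p.1 i p.2 * c q.1 i q.2) * (if p = q then γ ^ 2 else 0) := by
        intro q
        rw [integral_const_mul, hprod]
        congr 1
        simp [Prod.ext_iff]
      rw [Finset.sum_congr rfl fun q _ => h1 q]
      simp only [mul_ite, mul_zero]
      rw [Finset.sum_ite_eq]
      simp [sq]
      ring
    rw [Finset.sum_congr rfl fun p _ => hin p, ← Finset.mul_sum]
  -- Trace identity
  have htrace : (∑ i, ∑ p : Fin K × Fin 2, (c p.1 i p.2) ^ 2) = Matrix.trace G⁻¹ := by
    have h1 : ∀ k : Fin K, c k * (c k)ᵀ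
        = G⁻¹ * ((Mt ^ ((k : ℕ) + 1))ᵀ * Mt ^ ((k : ℕ) + 1)) * G⁻¹ᵀ := by
      intro k
      rw [hc]
      simp only [Matrix.transpose_mul, Matrix.transpose_transpose]
      rw [Matrix.mul_assoc, Matrix.mul_assoc, Matrix.mul_assoc]
    have h2 : (∑ k : Fin K, c k * (c k)ᵀ) = G⁻¹ᵀ := by
      calc ∑ k : Fin K, c k * (c k)ᵀ
          = (G⁻¹ * ∑ k : Fin K, (Mt ^ ((k : ℕ) + 1))ᵀ * Mt ^ ((k : ℕ) + 1)) * G⁻¹ᵀ := by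
            rw [Finset.mul_sum, Finset.sum_mul]
            exact Finset.sum_congr rfl fun k _ => h1 k
        _ = G⁻¹ᵀ := by rw [← hG, hGG, Matrix.one_mul]
    calc ∑ i, ∑ p : Fin K × Fin 2, (c p.1 i p.2) ^ 2
        = ∑ i, ∑ k : Fin K, ∑ j, (c k i j) ^ 2 := by
          refine Finset.sum_congr rfl fun i _ => ?_
          rw [Fintype.sum_prod_type]
      _ = ∑ k : Fin K, ∑ i, ∑ j, (c k i j) ^ 2 := Finset.sum_comm
      _ = ∑ k : Fin K, Matrix.trace (c k * (c k)ᵀ) := by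
          refine Finset.sum_congr rfl fun k _ => ?_
          simp [Matrix.trace, Matrix.mul_apply, Matrix.diag, sq]
      _ = Matrix.trace (∑ k : Fin K, c k * (c k)ᵀ) := (Matrix.trace_sum _ _).symm
      _ = Matrix.trace G⁻¹ := by rw [h2, Matrix.trace_transpose]
  -- MSE computation
  have hFeq : ∀ ω, ∑ i, (θhat ω i - θ i) ^ 2
      = ∑ i, ((b i) ^ 2
        + 2 * b i * (∑ p : Fin K × Fin 2, c p.1 i p.2 * r p.1 ω p.2)
        + ∑ p : Fin K × Fin 2, ∑ q : Fin K × Fin 2,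
          (c p.1 i p.2 * c q.1 i q.2) * (r p.1 ω p.2 * r q.1 ω q.2)) := by
    intro ω
    refine Finset.sum_congr rfl fun i _ => ?_
    rw [hkey' ω i]
    have hsq : (∑ p : Fin K × Fin 2, c p.1 i p.2 * r p.1 ω p.2) ^ 2
        = ∑ p : Fin K × Fin 2, ∑ q : Fin K × Fin 2,
          (c p.1 i p.2 * c q.1 i q.2) * (r p.1 ω p.2 * r q.1 ω q.2) := by
      rw [sq, Finset.sum_mul_sum]
      exact Finset.sum_congr rfl fun p _ => Finset.sum_congr rfl fun q _ => by ring
    rw [← hsq]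
    ring
  calc ∫ ω, ∑ i, (θhat ω i - θ i) ^ 2 ∂μ
      = ∫ ω, ∑ i, ((b i) ^ 2
        + 2 * b i * (∑ p : Fin K × Fin 2, c p.1 i p.2 * r p.1 ω p.2)
        + ∑ p : Fin K × Fin 2, ∑ q : Fin K × Fin 2,
          (c p.1 i p.2 * c q.1 i q.2) * (r p.1 ω p.2 * r q.1 ω q.2)) ∂μ :=
        integral_congr_ae (Filter.Eventually.of_forall hFeq)
    _ = ∑ i, ∫ ω, ((b i) ^ 2
        + 2 * b i * (∑ p : Fin K × Fin 2, c p.1 i p.2 * r p.1 ω p.2)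
        + ∑ p : Fin K × Fin 2, ∑ q : Fin K × Fin 2,
          (c p.1 i p.2 * c q.1 i q.2) * (r p.1 ω p.2 * r q.1 ω q.2)) ∂μ := by
        refine integral_finset_sum _ fun i _ => ?_
        exact ((integrable_const _).add ((hIntS i).const_mul _)).add (hIntSq i)
    _ = ∑ i, ((b i) ^ 2 + γ ^ 2 * ∑ p : Fin K × Fin 2, (c p.1 i p.2) ^ 2) := by
        refine Finset.sum_congr rfl fun i _ => ?_
        have hI0 : Integrable
            (fun ω => 2 * b i * ∑ p : Fin K × Fin 2, c p.1 i p.2 * r p.1 ω p.2) μ :=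
          (hIntS i).const_mul _
        have hI1 : Integrable (fun ω => (b i) ^ 2
            + 2 * b i * ∑ p : Fin K × Fin 2, c p.1 i p.2 * r p.1 ω p.2) μ :=
          (integrable_const _).add hI0
        rw [integral_add hI1 (hIntSq i), integral_add (integrable_const _) hI0,
          integral_const, integral_const_mul, hES i, hES2 i]
        simp
    _ = (∑ i, b i ^ 2) + γ ^ 2 * Matrix.trace G⁻¹ := by
        rw [Finset.sum_add_distrib, ← Finset.mul_sum, htrace]
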